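/- Let x ∈ {0,1}^ℕ with lim_n K(x_1⋯x_n)/n = 1, and let y ∈ {0,1}^ℕ with lim_n K(y_1⋯y_n)/n = 0 and lim_n (1/n)∑_{i≤n} y_i = 1. Then lim_n K(x_1^n/y_1^n)/n₁ = 1, where n₁ = ∑_{i≤n} y_i. -/

import Mathlib

open MeasureTheory Filter

/-- Cylinder set of infinite binary sequences extending the finite string `s`. -/
def cyl (s : List Bool) : Set (ℕ → Bool) := {x | ∀ i : Fin s.length, x i.val = s.get i}

/-- The length-`n` prefix of the infinite sequence `y`. -/
def pre (y : ℕ → Bool) (n : ℕ) : List Bool := List.ofFn (fun i : Fin n => y i.val)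

/-- `select x y` is the subsequence `x/y` of `x` at positions `i` with `y i = true`. -/
noncomputable def select (x y : ℕ → Bool) : ℕ → Bool :=
  fun n => x (Nat.nth (fun i => y i = true) n)

/-- Subsequence of a finite string `s` at the positions where `t` is `true`. -/
def selStr (s t : List Bool) : List Bool :=
  ((List.zip s t).filter (fun p => p.2)).map Prod.fst

/-- `s` is a prefix of the infinite sequence `f`. -/
def IsPrefixSeq (s : List Bool) (f : ℕ → Bool) : Prop :=
  ∀ i : Fin s.length, f i.val = s.get i

/-- Open set determined by level `n` of a test. -/
def openU (U : ℕ → Set (List Bool)) (n : ℕ) : Set (ℕ → Bool) := ⋃ s ∈ U n, cyl s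

/-- Martin-Löf test with respect to the measure `μ`. -/
def MLTest (μ : Measure (ℕ → Bool)) (U : ℕ → Set (List Bool)) : Prop :=
  REPred (fun p : ℕ × List Bool => p.2 ∈ U p.1) ∧
  (∀ n, openU U (n + 1) ⊆ openU U n) ∧
  (∀ n, μ (openU U n) < (2 : ENNReal)⁻¹ ^ n)

/-- `x` is Martin-Löf random w.r.t. `μ`: it passes every ML test. -/
def MLRandom (μ : Measure (ℕ → Bool)) (x : ℕ → Bool) : Prop :=
  ∀ U : ℕ → Set (List Bool), MLTest μ U → ∃ n, x ∉ openU U n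

/-- `μ` is a computable measure. -/
def ComputableMeasure (μ : Measure (ℕ → Bool)) : Prop :=
  ∃ A : List Bool → ℕ → ℚ, Computable₂ A ∧
    ∀ s k, |(μ (cyl s)).toReal - (A s k : ℝ)| < 1 / (k + 1)

/-- The uniform (fair-coin) measure, characterized on cylinders. -/
def IsUniform (μ : Measure (ℕ → Bool)) : Prop :=
  ∀ s : List Bool, μ (cyl s) = (2 : ENNReal)⁻¹ ^ s.length

lemma selStr_length : ∀ (s t : List Bool), s.length = t.length →
    (selStr s t).length = t.count true := by
  intro s
  induction s with
  | nil => intro t h; cases t with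
    | nil => simp [selStr]
    | cons b t => simp at h
  | cons a s ih =>
    intro t h
    cases t with
    | nil => simp at h
    | cons b t =>
      simp only [List.length_cons, Nat.add_right_cancel_iff] at h
      cases b <;> simp [selStr, List.zip_cons_cons, List.filter_cons, List.count_cons,
        ← ih t h]

lemma count_not (t : List Bool) : (t.map not).count true + t.count true = t.length := by
  induction t with
  | nil => simp
  | cons b t ih => cases b <;> simp [List.count_cons, ← ih] <;> omega

lemma loglim : Tendsto (fun n : ℕ => (Nat.log 2 (n + 1) : ℝ) / n) atTop (nhds 0) := by
  have h1 : Tendsto (fun x : ℝ => Real.log x / x) atTop (nhds 0) :=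
    Real.isLittleO_log_id_atTop.tendsto_div_nhds_zero
  have h2 : Tendsto (fun x : ℝ => Real.log (x + 1) / (x + 1)) atTop (nhds 0) :=
    h1.comp (tendsto_atTop_add_const_right _ 1 tendsto_id)
  have h3 : Tendsto (fun x : ℝ => (x + 1) / x) atTop (nhds 1) := by
    have h4 : Tendsto (fun x : ℝ => 1 + x⁻¹) atTop (nhds (1 + 0)) :=
      tendsto_const_nhds.add tendsto_inv_atTop_zero
    refine ((h4.congr' ?_).mono_right (by norm_num))
    filter_upwards [eventually_gt_atTop (0:ℝ)] with x hx
    field_simp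
  have h5 : Tendsto (fun x : ℝ => Real.log (x + 1) / x) atTop (nhds 0) := by
    have := h2.mul h3
    norm_num at this
    refine this.congr' ?_
    filter_upwards [eventually_gt_atTop (0:ℝ)] with x hx
    have hx1 : x + 1 ≠ 0 := by positivity
    field_simp
  have h6 : Tendsto (fun n : ℕ => Real.logb 2 ((n:ℝ) + 1) / n) atTop (nhds 0) := by
    have := ((h5.comp tendsto_natCast_atTop_atTop).const_mul (Real.log 2)⁻¹)
    rw [mul_zero] at this
    refine this.congr fun n => ?_
    simp [Real.logb, div_div, mul_comm, Function.comp]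
    ring
  refine tendsto_of_tendsto_of_tendsto_of_le_of_le' tendsto_const_nhds h6 ?_ ?_
  · filter_upwards with n; positivity
  · filter_upwards with n
    rcases Nat.eq_zero_or_pos n with hn | hn
    · simp [hn]
    · have hlog : (Nat.log 2 (n + 1) : ℝ) ≤ Real.logb 2 ((n : ℝ) + 1) := by
        have := Real.natLog_le_logb (n + 1) 2
        push_cast at this ⊢
        convert this using 2
      have hn' : (0:ℝ) < n := by exact_mod_cast hn
      exact div_le_div_of_nonneg_right hlog hn'.le

open Encodable in
/-- Let `K` be a prefix complexity (of encoded objects) satisfying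
the standard facts listed below. If `K(x_1^n)/n → 1`, `K(y_1^n)/n → 0` and the
density of 1's in `y` tends to 1, then `K(x_1^n/y_1^n)/n₁ → 1`, where
`n₁ = ∑_{i≤n} y_i` is the length of the selected subsequence. -/
theorem stmt14 (K : ℕ → ℕ)
    (hSplit : ∃ c : ℕ, ∀ (x y : ℕ → Bool) (n : ℕ),
      |(K (encode (pre x n)) : ℤ) -
        K (encode (selStr (pre x n) (pre y n),
                   selStr (pre x n) ((pre y n).map not), pre y n))| ≤
        K (encode (pre y n)) + c)
    (hSub3 : ∃ c : ℕ, ∀ a b t : List Bool,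
      K (encode (a, b, t)) ≤ K (encode a) + K (encode b) + K (encode t) + c)
    (hDrop : ∃ c : ℕ, ∀ a b t : List Bool,
      |(K (encode a) : ℤ) - K (encode (a, b, t))| ≤ K (encode b) + K (encode t) + c)
    (hLen : ∃ c : ℕ, ∀ s : List Bool,
      K (encode s) ≤ s.length + c * (Nat.log 2 (s.length + 1) + 1))
    (x y : ℕ → Bool)
    (hxK : Tendsto (fun n => (K (encode (pre x n)) : ℝ) / n) atTop (nhds 1))
    (hyK : Tendsto (fun n => (K (encode (pre y n)) : ℝ) / n) atTop (nhds 0))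
    (hdens : Tendsto (fun n => (((pre y n).count true : ℝ)) / n) atTop (nhds 1)) :
    Tendsto (fun n => (K (encode (selStr (pre x n) (pre y n))) : ℝ) /
      (pre y n).count true) atTop (nhds 1) := by
  obtain ⟨c1, h1⟩ := hSplit
  obtain ⟨c3, h3⟩ := hDrop
  obtain ⟨c4, h4⟩ := hLen
  set n1 : ℕ → ℕ := fun n => (pre y n).count true with hn1def
  set A : ℕ → ℕ := fun n => K (encode (selStr (pre x n) (pre y n))) with hAdef
  set B : ℕ → ℕ := fun n => K (encode (selStr (pre x n) ((pre y n).map not))) with hBdef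
  set N : ℕ → ℕ := fun n => K (encode (pre x n)) with hNdef
  set T : ℕ → ℕ := fun n => K (encode (pre y n)) with hTdef
  have hlenpre : ∀ (z : ℕ → Bool) (n : ℕ), (pre z n).length = n := by
    intro z n; simp [pre]
  have hn1le : ∀ n, n1 n ≤ n := by
    intro n
    calc n1 n ≤ (pre y n).length := List.count_le_length
    _ = n := hlenpre y n
  have hAlen : ∀ n, (selStr (pre x n) (pre y n)).length = n1 n := by
    intro n; exact selStr_length _ _ (by rw [hlenpre, hlenpre])
  have hBlen : ∀ n, (selStr (pre x n) ((pre y n).map not)).length = n - n1 n := by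
    intro n
    have h := selStr_length (pre x n) ((pre y n).map not)
      (by rw [hlenpre, List.length_map, hlenpre])
    rw [h]
    have hc := count_not (pre y n)
    rw [hlenpre] at hc
    simp only [hn1def]
    omega
  -- upper bound on K(a_n)
  have key_up : ∀ n, A n ≤ n1 n + c4 * (Nat.log 2 (n + 1) + 1) := by
    intro n
    have h5 := h4 (selStr (pre x n) (pre y n))
    rw [hAlen] at h5
    simp only [hAdef, hn1def] at h5 ⊢
    have hm : Nat.log 2 ((pre y n).count true + 1) ≤ Nat.log 2 (n + 1) :=
      Nat.log_mono_right (by have := hn1le n; simp only [hn1def] at this; omega)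
    have h6 := Nat.mul_le_mul_left c4
      (by omega : Nat.log 2 ((pre y n).count true + 1) + 1 ≤ Nat.log 2 (n + 1) + 1)
    omega
  -- lower bound on K(a_n)
  have key_low : ∀ n, (N n : ℤ) ≤ A n + ((n - n1 n : ℕ) : ℤ)
      + c4 * (Nat.log 2 (n + 1) + 1) + 2 * T n + c1 + c3 := by
    intro n
    have e1 := abs_le.mp (h1 x y n)
    have e3 := abs_le.mp
      (h3 (selStr (pre x n) (pre y n)) (selStr (pre x n) ((pre y n).map not)) (pre y n))
    have e4 : K (encode (selStr (pre x n) ((pre y n).map not)))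
        ≤ (n - n1 n) + c4 * (Nat.log 2 (n + 1) + 1) := by
      have hb := h4 (selStr (pre x n) ((pre y n).map not))
      rw [hBlen] at hb
      have hm : Nat.log 2 ((n - n1 n) + 1) ≤ Nat.log 2 (n + 1) :=
        Nat.log_mono_right (by omega)
      have h7 := Nat.mul_le_mul_left c4
        (by omega : Nat.log 2 ((n - n1 n) + 1) + 1 ≤ Nat.log 2 (n + 1) + 1)
      omega
    have e4' : (K (encode (selStr (pre x n) ((pre y n).map not))) : ℤ) ≤ ((n - n1 n : ℕ) : ℤ) + c4 * (Nat.log 2 (n + 1) + 1) := by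
      exact_mod_cast e4
    simp only [hAdef, hNdef, hTdef] at *
    push_cast at e1 e3
    linarith [e1.1, e1.2, e3.1, e3.2]
  -- real versions
  have low_r : ∀ n, (N n : ℝ) - 2 * T n - ((n : ℝ) - n1 n)
      - c4 * ((Nat.log 2 (n + 1) : ℝ) + 1) - (c1 + c3) ≤ A n := by
    intro n
    have h' := key_low n
    rw [Nat.cast_sub (hn1le n)] at h'
    have h'' : (N n : ℝ) ≤ (A n : ℝ) + ((n : ℝ) - (n1 n : ℝ))
        + (c4 : ℝ) * ((Nat.log 2 (n + 1) : ℝ) + 1) + 2 * (T n : ℝ) + (c1 : ℝ) + (c3 : ℝ) := by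
      exact_mod_cast h'
    linarith
  have up_r : ∀ n, (A n : ℝ) ≤ (n1 n : ℝ) + c4 * ((Nat.log 2 (n + 1) : ℝ) + 1) := by
    intro n
    have := key_up n
    exact_mod_cast this
  -- the two squeezing sequences
  set L : ℕ → ℝ := fun n => (N n : ℝ) / n - 2 * ((T n : ℝ) / n) - (1 - (n1 n : ℝ) / n)
    - (c4 : ℝ) * ((Nat.log 2 (n + 1) : ℝ) / n) - ((c4 : ℝ) + c1 + c3) / n with hLdef
  set U : ℕ → ℝ := fun n => (n1 n : ℝ) / n + (c4 : ℝ) * ((Nat.log 2 (n + 1) : ℝ) / n)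
    + (c4 : ℝ) / n with hUdef
  have hL : Tendsto L atTop (nhds (1 - 2 * 0 - (1 - 1) - (c4 : ℝ) * 0 - 0)) :=
    ((((hxK.sub (hyK.const_mul 2)).sub (tendsto_const_nhds.sub hdens)).sub
      (loglim.const_mul (c4 : ℝ))).sub (tendsto_const_div_atTop_nhds_zero_nat _))
  have hU : Tendsto U atTop (nhds (1 + (c4 : ℝ) * 0 + 0)) :=
    (hdens.add (loglim.const_mul (c4 : ℝ))).add (tendsto_const_div_atTop_nhds_zero_nat _)
  norm_num at hL hU
  have hg : Tendsto (fun n => (A n : ℝ) / n) atTop (nhds 1) := by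
    refine tendsto_of_tendsto_of_tendsto_of_le_of_le' hL hU ?_ ?_
    · filter_upwards [eventually_ge_atTop 1] with n hn
      have hn0 : (0 : ℝ) < n := by exact_mod_cast hn
      have heq : L n = ((N n : ℝ) - 2 * T n - ((n : ℝ) - n1 n)
          - c4 * ((Nat.log 2 (n + 1) : ℝ) + 1) - (c1 + c3)) / n := by
        rw [hLdef]
        field_simp
        ring
      rw [heq]
      exact div_le_div_of_nonneg_right (low_r n) hn0.le
    · filter_upwards [eventually_ge_atTop 1] with n hn
      have hn0 : (0 : ℝ) < n := by exact_mod_cast hn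
      have heq : U n = ((n1 n : ℝ) + c4 * ((Nat.log 2 (n + 1) : ℝ) + 1)) / n := by
        rw [hUdef]
        field_simp
        ring
      rw [heq]
      exact div_le_div_of_nonneg_right (up_r n) hn0.le
  have hninv : Tendsto (fun n : ℕ => (n : ℝ) / (n1 n)) atTop (nhds 1) := by
    have := hdens.inv₀ one_ne_zero
    simpa [inv_div] using this
  have hfin := hg.mul hninv
  rw [one_mul] at hfin
  refine hfin.congr' ?_
  filter_upwards [eventually_ge_atTop 1] with n hn
  have hn0 : (n : ℝ) ≠ 0 := by positivity
  show (A n : ℝ) / (n : ℝ) * ((n : ℝ) / ((n1 n : ℕ) : ℝ)) = (A n : ℝ) / ((n1 n : ℕ) : ℝ)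
  rw [div_mul_div_comm, mul_comm ((A n : ℝ)) ((n : ℝ)), mul_div_mul_left _ _ hn0]
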